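/- For the exponential-walk Metropolis–Hastings kernel, if i = v_0, v_1, …, v_m = j is a walk in G (i.e., w_{v_l v_{l+1}} = 1 for all 0 ≤ l < m) with m ≥ 1, then the m-step transition probability satisfies (P^m)_{ij} ≥ (δ_f^{m−1}/(d_max Δ_f)^m) · p_f(j). -/
import Mathlib


/-- For the exponential-walk Metropolis–Hastings kernel, if
`i = v 0, v 1, …, v m = j` is a walk in `G` with `m ≥ 1`, then the `m`-step transition
probability satisfies `(P ^ m) i j ≥ (δ_f ^ (m − 1) / (d_max * Δ_f) ^ m) * p_f j`. -/
theorem exp_walk_multi_step_dominance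
    {n : ℕ} (hn : 2 ≤ n)
    (W : Matrix (Fin n) (Fin n) ℝ)
    (hWsymm : ∀ i j, W i j = W j i)
    (hW01 : ∀ i j, W i j = 0 ∨ W i j = 1)
    (hWdiag : ∀ i, W i i = 0)
    (hWconn : ∀ i j : Fin n, ∃ m : ℕ, ∃ v : Fin (m + 1) → Fin n,
      v 0 = i ∧ v (Fin.last m) = j ∧ ∀ l : Fin m, W (v l.castSucc) (v l.succ) = 1)
    (deg : Fin n → ℝ) (hdeg : ∀ i, deg i = ∑ j, W i j)
    (hdegpos : ∀ i, 0 < deg i)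
    (dmax : ℝ) (hdmax : IsGreatest (Set.range deg) dmax)
    (f : Fin n → ℝ) (γ : ℝ) (hγ : 0 ≤ γ)
    (pf : Fin n → ℝ)
    (hpf : ∀ i, pf i = Real.exp (γ * f i) / ∑ l, Real.exp (γ * f l))
    (δf Δf : ℝ) (hδf : IsLeast (Set.range pf) δf) (hΔf : IsGreatest (Set.range pf) Δf)
    (P : Matrix (Fin n) (Fin n) ℝ)
    (hP : ∀ i j, j ≠ i →
      P i j = (W i j / deg i) * min 1 (Real.exp (γ * (f j - f i)) * deg i / deg j))
    (hPdiag : ∀ i, P i i = 1 - ∑ j ∈ Finset.univ.erase i, P i j)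
    (i j : Fin n) (m : ℕ) (hm : 1 ≤ m)
    (v : Fin (m + 1) → Fin n) (hv0 : v 0 = i) (hvm : v (Fin.last m) = j)
    (hwalk : ∀ l : Fin m, W (v l.castSucc) (v l.succ) = 1) :
    δf ^ (m - 1) / (dmax * Δf) ^ m * pf j ≤ (P ^ m) i j := by
  -- basic positivity
  have hZ : (0:ℝ) < ∑ l, Real.exp (γ * f l) :=
    Finset.sum_pos (fun l _ => Real.exp_pos _) ⟨i, Finset.mem_univ i⟩
  have hpfpos : ∀ a, 0 < pf a := by
    intro a; rw [hpf]; positivity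
  have hpfge : ∀ a, δf ≤ pf a := fun a => hδf.2 ⟨a, rfl⟩
  have hpfle : ∀ a, pf a ≤ Δf := fun a => hΔf.2 ⟨a, rfl⟩
  have hδpos : 0 < δf := by
    obtain ⟨a0, ha0⟩ := hδf.1; exact ha0 ▸ hpfpos a0
  have hΔpos : 0 < Δf := lt_of_lt_of_le (hpfpos i) (hpfle i)
  have hdegle : ∀ a, deg a ≤ dmax := fun a => hdmax.2 ⟨a, rfl⟩
  have hdmaxpos : 0 < dmax := lt_of_lt_of_le (hdegpos i) (hdegle i)
  have hWnn : ∀ a b, 0 ≤ W a b := by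
    intro a b; rcases hW01 a b with h | h <;> rw [h] <;> norm_num
  -- exponential ratio
  have hexp : ∀ a b, Real.exp (γ * (f b - f a)) = pf b / pf a := by
    intro a b
    rw [mul_sub, Real.exp_sub, hpf, hpf]
    rw [div_div_div_cancel_right₀]
    exact ne_of_gt hZ
  -- one-step bound
  have hstep : ∀ a b, W a b = 1 → pf b / (dmax * Δf) ≤ P a b := by
    intro a b hab
    have hba : b ≠ a := by
      rintro rfl; rw [hWdiag] at hab; norm_num at hab
    rw [hP a b hba, hab, hexp a b]
    have hda := hdegpos a
    have hdb := hdegpos b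
    have hpa := hpfpos a
    have hpb := hpfpos b
    rcases le_total 1 (pf b / pf a * deg a / deg b) with h | h
    · rw [min_eq_left h]
      calc pf b / (dmax * Δf) ≤ Δf / (deg a * Δf) := by
            apply div_le_div₀ (le_of_lt hΔpos) (hpfle b) (by positivity)
            exact mul_le_mul_of_nonneg_right (hdegle a) (le_of_lt hΔpos)
        _ = 1 / deg a * 1 := by field_simp <;> ring
    · rw [min_eq_right h]
      have heq : 1 / deg a * (pf b / pf a * deg a / deg b) = pf b / (pf a * deg b) := by
        field_simp <;> ring
      rw [heq]
      apply div_le_div₀ (le_of_lt hpb) le_rfl (by positivity)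
      calc pf a * deg b ≤ Δf * dmax :=
            mul_le_mul (hpfle a) (hdegle b) (le_of_lt hdb) (le_of_lt hΔpos)
        _ = dmax * Δf := mul_comm _ _
  -- P entries bounded and nonnegative
  have hPle : ∀ a b, b ≠ a → P a b ≤ W a b / deg a := by
    intro a b hba
    rw [hP a b hba]
    exact mul_le_of_le_one_right (div_nonneg (hWnn a b) (le_of_lt (hdegpos a)))
      (min_le_left _ _)
  have hPnn : ∀ a b, 0 ≤ P a b := by
    intro a b
    by_cases hba : b = a
    · subst hba
      rw [hPdiag]
      have hsum : ∑ k ∈ Finset.univ.erase b, P b k ≤ 1 := by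
        calc ∑ k ∈ Finset.univ.erase b, P b k
            ≤ ∑ k ∈ Finset.univ.erase b, W b k / deg b :=
              Finset.sum_le_sum (fun k hk => hPle b k (Finset.ne_of_mem_erase hk))
          _ = (∑ k ∈ Finset.univ.erase b, W b k) / deg b := by rw [Finset.sum_div]
          _ = (∑ k, W b k) / deg b := by
              rw [Finset.sum_erase _ (hWdiag b)]
          _ = 1 := by rw [← hdeg, div_self (ne_of_gt (hdegpos b))]
      linarith
    · rw [hP a b hba]
      have : (0:ℝ) ≤ Real.exp (γ * (f b - f a)) * deg a / deg b :=
        div_nonneg (mul_nonneg (Real.exp_pos _).le (hdegpos a).le) (hdegpos b).le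
      exact mul_nonneg (div_nonneg (hWnn a b) (le_of_lt (hdegpos a)))
        (le_min zero_le_one this)
  have hpownn : ∀ (k : ℕ) (a b : Fin n), 0 ≤ (P ^ k) a b := by
    intro k
    induction k with
    | zero =>
      intro a b
      rw [pow_zero, Matrix.one_apply]
      split <;> norm_num
    | succ k ih =>
      intro a b
      rw [pow_succ, Matrix.mul_apply]
      exact Finset.sum_nonneg fun c _ => mul_nonneg (ih a c) (hPnn c b)
  -- path lower bound for matrix powers
  have hpath : ∀ (k : ℕ) (u : Fin (k+1) → Fin n),
      (∏ l : Fin k, P (u l.castSucc) (u l.succ)) ≤ (P ^ k) (u 0) (u (Fin.last k)) := by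
    intro k
    induction k with
    | zero =>
      intro u
      have h0 : u (Fin.last 0) = u 0 := rfl
      rw [h0, pow_zero, Matrix.one_apply_eq]
      simp
    | succ k ih =>
      intro u
      have hih' := ih (fun t => u t.succ)
      simp only [Fin.succ_castSucc, Fin.succ_last, Fin.succ_zero_eq_one] at hih'
      rw [Fin.prod_univ_succ]
      simp only [Fin.castSucc_zero, Fin.succ_zero_eq_one]
      calc P (u 0) (u 1) * ∏ l : Fin k, P (u l.succ.castSucc) (u l.succ.succ)
          ≤ P (u 0) (u 1) * (P ^ k) (u 1) (u (Fin.last (k+1))) :=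
            mul_le_mul_of_nonneg_left hih' (hPnn _ _)
        _ ≤ ∑ c, P (u 0) c * (P ^ k) c (u (Fin.last (k+1))) :=
            Finset.single_le_sum (f := fun c => P (u 0) c * (P ^ k) c (u (Fin.last (k+1))))
              (fun c _ => mul_nonneg (hPnn _ _) (hpownn _ _ _)) (Finset.mem_univ (u 1))
        _ = (P ^ (k+1)) (u 0) (u (Fin.last (k+1))) := by
            rw [pow_succ', Matrix.mul_apply]
  -- combine
  obtain ⟨k, rfl⟩ : ∃ k, m = k + 1 := ⟨m - 1, (Nat.succ_pred_eq_of_pos hm).symm⟩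
  have hPij := hpath (k+1) v
  rw [hv0, hvm] at hPij
  have hprodpf : δf ^ k * pf j ≤ ∏ l : Fin (k+1), pf (v l.succ) := by
    rw [Fin.prod_univ_castSucc]
    have hlastpf : pf (v (Fin.last k).succ) = pf j := by
      rw [Fin.succ_last, hvm]
    rw [hlastpf]
    apply mul_le_mul_of_nonneg_right _ (le_of_lt (hpfpos j))
    calc δf ^ k = ∏ _l : Fin k, δf := by rw [Finset.prod_const]; simp
      _ ≤ ∏ l : Fin k, pf (v l.castSucc.succ) :=
        Finset.prod_le_prod (fun _ _ => le_of_lt hδpos) (fun l _ => hpfge _)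
  have hlow : δf ^ k / (dmax * Δf) ^ (k+1) * pf j
      ≤ ∏ l : Fin (k+1), P (v l.castSucc) (v l.succ) := by
    calc δf ^ k / (dmax * Δf) ^ (k+1) * pf j
        = (δf ^ k * pf j) / (dmax * Δf) ^ (k+1) := by ring
      _ ≤ (∏ l : Fin (k+1), pf (v l.succ)) / (dmax * Δf) ^ (k+1) := by
          apply div_le_div_of_nonneg_right hprodpf
          positivity
      _ = ∏ l : Fin (k+1), pf (v l.succ) / (dmax * Δf) := by
          rw [Finset.prod_div_distrib, Finset.prod_const]
          simp
      _ ≤ ∏ l : Fin (k+1), P (v l.castSucc) (v l.succ) :=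
          Finset.prod_le_prod (fun l _ => div_nonneg (hpfpos _).le (by positivity))
            (fun l _ => hstep _ _ (hwalk l))
  have hk : k + 1 - 1 = k := rfl
  rw [hk]
  exact le_trans hlow hPij
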